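/- arXiv:2401.06492 — 2 statements merged into one kernel-verified Lean document; each statement's English description precedes it below -/
import Mathlib

section
/- Let E be a real Banach space, m ≥ 1, and let u : ℝ → E be (m+1)-times continuously differentiable. Let τ > 0, set t_j := j·τ, and let n ≥ m. Then for all ℓ₁, ℓ₂ ∈ {0, 1, …, m} one has ‖∂_τ^{m−ℓ₁}(u^{(ℓ₁)})(t_n) − ∂_τ^{m−ℓ₂}(u^{(ℓ₂)})(t_n)‖ ≤ m · ∫_{t_{n−m}}^{t_n} ‖u^{(m+1)}(s)‖ ds, where ∂_τ^{k} is applied to the grid sequence j ↦ u^{(ℓ)}(t_j). -/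
/-- Backward difference quotient of a sequence: `∂_τ a j = (a j - a (j-1)) / τ`
(with the `Nat` subtraction convention at `j = 0`). -/
noncomputable def dtau {E : Type*} [AddCommGroup E] [Module ℝ E] (τ : ℝ) (a : ℕ → E) :
    ℕ → E := fun j => τ⁻¹ • (a j - a (j - 1))

open MeasureTheory intervalIntegral
set_option linter.unusedSectionVars false
set_option linter.unusedVariables false
set_option maxHeartbeats 1000000

section helpers
variable {E G : Type*} [NormedAddCommGroup E] [NormedSpace ℝ E]
  [NormedAddCommGroup G] [NormedSpace ℝ G]

lemma dtau_congr (τ : ℝ) : ∀ (r : ℕ) (a b : ℕ → E) (n : ℕ),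
    (∀ j, n - r ≤ j → j ≤ n → a j = b j) → (dtau τ)^[r] a n = (dtau τ)^[r] b n := by
  intro r
  induction r with
  | zero => intro a b n h; simpa using h n (by omega) le_rfl
  | succ r IH =>
    intro a b n h
    rw [Function.iterate_succ_apply', Function.iterate_succ_apply']
    have h1 : (dtau τ)^[r] a n = (dtau τ)^[r] b n := by
      apply IH; intro j hj1 hj2; exact h j (by omega) hj2
    have h2 : (dtau τ)^[r] a (n - 1) = (dtau τ)^[r] b (n - 1) := by
      apply IH; intro j hj1 hj2; exact h j (by omega) (by omega)
    simp [dtau, h1, h2]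

lemma dtau_sub (τ : ℝ) (a b : ℕ → E) :
    dtau τ (fun j => a j - b j) = fun j => dtau τ a j - dtau τ b j := by
  funext j; simp only [dtau]; rw [← smul_sub]; congr 1; abel

lemma dtau_iter_sub (τ : ℝ) : ∀ (r : ℕ) (a b : ℕ → E),
    (dtau τ)^[r] (fun j => a j - b j) =
      fun n => (dtau τ)^[r] a n - (dtau τ)^[r] b n := by
  intro r
  induction r with
  | zero => intro a b; rfl
  | succ r IH =>
    intro a b
    rw [Function.iterate_succ_apply, dtau_sub, IH]
    simp [Function.iterate_succ_apply]

lemma dtau_smul (τ c : ℝ) (a : ℕ → E) :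
    dtau τ (fun j => c • a j) = fun j => c • dtau τ a j := by
  funext j; simp only [dtau, ← smul_sub]; rw [smul_comm]

lemma dtau_iter_smul (τ c : ℝ) : ∀ (r : ℕ) (a : ℕ → E),
    (dtau τ)^[r] (fun j => c • a j) = fun n => c • (dtau τ)^[r] a n := by
  intro r
  induction r with
  | zero => intro a; rfl
  | succ r IH =>
    intro a
    rw [Function.iterate_succ_apply, dtau_smul, IH]
    simp [Function.iterate_succ_apply]

lemma dtau_clm (τ : ℝ) (L : E →L[ℝ] G) : ∀ (r : ℕ) (a : ℕ → E),
    (dtau τ)^[r] (fun j => L (a j)) = fun n => L ((dtau τ)^[r] a n) := by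
  intro r
  induction r with
  | zero => intro a; rfl
  | succ r IH =>
    intro a
    have : dtau τ (fun j => L (a j)) = fun j => L (dtau τ a j) := by
      funext j; simp [dtau, map_sub, _root_.map_smul]
    rw [Function.iterate_succ_apply, this, IH]
    simp [Function.iterate_succ_apply]

lemma iteratedDeriv_sub' {k : ℕ} {f g : ℝ → E} (hf : ContDiff ℝ k f) (hg : ContDiff ℝ k g)
    (x : ℝ) :
    iteratedDeriv k (fun y => f y - g y) x = iteratedDeriv k f x - iteratedDeriv k g x := by
  have := iteratedDerivWithin_sub (Set.mem_univ x) uniqueDiffOn_univ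
    hf.contDiffWithinAt (g := g) hg.contDiffWithinAt
  simpa [iteratedDerivWithin_univ, Pi.sub_def] using this

lemma iteratedDeriv_iteratedDeriv (a b : ℕ) (f : ℝ → E) :
    iteratedDeriv a (iteratedDeriv b f) = iteratedDeriv (a + b) f := by
  simp only [iteratedDeriv_eq_iterate]
  exact (Function.iterate_add_apply deriv a b f).symm

end helpers

section core
variable {F : Type*} [NormedAddCommGroup F] [NormedSpace ℝ F] [CompleteSpace F]

noncomputable def Eseq (τ : ℝ) (g : ℝ → F) : ℕ → F :=
  fun j => τ⁻¹ • ∫ s in ((j : ℝ) * τ - τ)..((j : ℝ) * τ), (g s - g ((j : ℝ) * τ))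

lemma norm_Eseq_le {τ : ℝ} (hτ : 0 < τ) {g : ℝ → F} (hg : ContDiff ℝ 1 g) (j : ℕ) :
    ‖Eseq τ g j‖ ≤ ∫ s in ((j : ℝ) * τ - τ)..((j : ℝ) * τ), ‖deriv g s‖ := by
  set b := (j : ℝ) * τ with hb
  set a := b - τ with ha
  have hab : a ≤ b := by rw [ha]; linarith
  have hderiv : Continuous (deriv g) := hg.continuous_deriv le_rfl
  have hdiff : Differentiable ℝ g := hg.differentiable one_ne_zero
  set C := ∫ s in a..b, ‖deriv g s‖ with hC
  have key : ∀ s ∈ Set.uIoc a b, ‖g s - g b‖ ≤ C := by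
    intro s hs
    rw [Set.uIoc_of_le hab] at hs
    have h1 : ∫ x in s..b, deriv g x = g b - g s :=
      integral_deriv_eq_sub (fun x _ => hdiff x) (hderiv.intervalIntegrable _ _)
    rw [show g s - g b = -∫ x in s..b, deriv g x by rw [h1]; abel, norm_neg]
    calc ‖∫ x in s..b, deriv g x‖ ≤ ∫ x in s..b, ‖deriv g x‖ :=
          norm_integral_le_integral_norm hs.2
      _ ≤ C := integral_mono_interval hs.1.le hs.2 le_rfl
          (by filter_upwards with x using norm_nonneg _)
          (hderiv.norm.intervalIntegrable _ _)
  have h2 : ‖∫ s in a..b, (g s - g b)‖ ≤ C * |b - a| :=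
    norm_integral_le_of_norm_le_const key
  have h3 : ‖Eseq τ g j‖ = τ⁻¹ * ‖∫ s in a..b, (g s - g b)‖ := by
    rw [Eseq, norm_smul, Real.norm_eq_abs, abs_of_pos (inv_pos.mpr hτ)]
  rw [h3]
  have hba : |b - a| = τ := by rw [ha]; simp [abs_of_pos hτ]
  calc τ⁻¹ * ‖∫ s in a..b, (g s - g b)‖ ≤ τ⁻¹ * (C * τ) := by
        rw [← hba]
        exact mul_le_mul_of_nonneg_left h2 (by positivity)
    _ = C := by field_simp

lemma dtau_Eseq {τ : ℝ} (hτ : 0 < τ) {g : ℝ → F} (hg : Continuous g) {j : ℕ} (hj : 1 ≤ j) :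
    dtau τ (Eseq τ g) j = τ⁻¹ • Eseq τ (fun s => g s - g (s - τ)) j := by
  set b := (j : ℝ) * τ with hb
  have hj1 : ((j - 1 : ℕ) : ℝ) * τ = b - τ := by
    have h1 : (1:ℕ) ≤ j := hj
    rw [Nat.cast_sub h1, hb]; push_cast; ring
  have e1 : Eseq τ g (j - 1) = τ⁻¹ • ∫ s in (b - τ)..b, (g (s - τ) - g (b - τ)) := by
    rw [Eseq, integral_comp_sub_right (fun s => g s - g (b - τ)) τ, hj1]
  have hcont : Continuous fun s => g s - g b := hg.sub continuous_const
  have hcont2 : Continuous fun s => g (s - τ) - g (b - τ) :=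
    (hg.comp (continuous_id.sub continuous_const)).sub continuous_const
  have e2 : (∫ s in (b - τ)..b, (g s - g b)) - ∫ s in (b - τ)..b, (g (s - τ) - g (b - τ))
      = ∫ s in (b - τ)..b, ((g s - g (s - τ)) - (g b - g (b - τ))) := by
    rw [← integral_sub (hcont.intervalIntegrable _ _) (hcont2.intervalIntegrable _ _)]
    congr 1; funext s; abel
  show τ⁻¹ • (Eseq τ g j - Eseq τ g (j - 1)) = _
  rw [e1, Eseq, Eseq, ← smul_sub, e2]

end core

section corebound
variable {F : Type*} [NormedAddCommGroup F] [NormedSpace ℝ F] [CompleteSpace F]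

lemma core_bound {τ : ℝ} (hτ : 0 < τ) :
    ∀ (r : ℕ) (g : ℝ → F), ContDiff ℝ (r + 1 : ℕ) g → ∀ n : ℕ, r + 1 ≤ n →
    ‖(dtau τ)^[r] (Eseq τ g) n‖ ≤
      ∫ s in ((n : ℝ) * τ - ((r : ℝ) + 1) * τ)..((n : ℝ) * τ), ‖iteratedDeriv (r + 1) g s‖ := by
  intro r
  induction r with
  | zero =>
    intro g hg n _
    simpa [iteratedDeriv_one] using norm_Eseq_le hτ hg n
  | succ r IH =>
    intro g hg n hn
    have hg' : ContDiff ℝ (r + 1 : ℕ) g := hg.of_le (by exact_mod_cast Nat.le_succ (r + 1))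
    have hgs : ContDiff ℝ (r + 1 : ℕ) (fun s => g (s - τ)) :=
      hg'.comp (contDiff_id.sub contDiff_const)
    set ψ : ℝ → F := fun s => g s - g (s - τ) with hψdef
    have hψ : ContDiff ℝ (r + 1 : ℕ) ψ := hg'.sub hgs
    -- replacement step
    have hrepl : (dtau τ)^[r + 1] (Eseq τ g) n = τ⁻¹ • (dtau τ)^[r] (Eseq τ ψ) n := by
      rw [Function.iterate_succ_apply]
      rw [dtau_congr τ r (dtau τ (Eseq τ g)) (fun j => τ⁻¹ • Eseq τ ψ j) n
        (fun j hj1 hj2 => dtau_Eseq hτ hg.continuous (by omega))]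
      rw [dtau_iter_smul]
    set b := (n : ℝ) * τ with hb
    set a' := b - ((r : ℝ) + 1) * τ with ha'
    set c := b - ((r : ℝ) + 2) * τ with hc
    have hca' : c = a' - τ := by rw [hc, ha']; ring
    set h : ℝ → ℝ := fun s => ‖iteratedDeriv (r + 1 + 1) g s‖ with hh
    have hcont_h : Continuous h :=
      (ContDiff.continuous_iteratedDeriv (r + 1 + 1) hg (by exact_mod_cast le_rfl)).norm
    set H : ℝ → ℝ := fun x => ∫ s in c..x, h s with hH
    have hint : ∀ a b : ℝ, IntervalIntegrable h volume a b :=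
      fun a b => hcont_h.intervalIntegrable a b
    have hH_cont : Continuous H := continuous_primitive hint c
    have Hdiff : ∀ x y : ℝ, (∫ s in x..y, h s) = H y - H x := by
      intro x y
      have A := integral_add_adjacent_intervals (μ := volume) (hcont_h.intervalIntegrable c x)
        (hcont_h.intervalIntegrable x y)
      rw [hH]; dsimp only; linarith
    -- IH for ψ
    have bound1 := IH ψ hψ n (by omega)
    -- pointwise bound
    have hGdiff : Differentiable ℝ (iteratedDeriv (r + 1) g) :=
      hg.differentiable_iteratedDeriv (r + 1) (by exact_mod_cast Nat.lt_succ_self (r + 1))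
    have hderiv_eq : deriv (iteratedDeriv (r + 1) g) = iteratedDeriv (r + 1 + 1) g :=
      (iteratedDeriv_succ).symm
    have key2 : ∀ s ∈ Set.Icc a' b, ‖iteratedDeriv (r + 1) ψ s‖ ≤ H s - H (s - τ) := by
      intro s hs
      have hΨ : iteratedDeriv (r + 1) ψ s =
          iteratedDeriv (r + 1) g s - iteratedDeriv (r + 1) g (s - τ) := by
        rw [hψdef, iteratedDeriv_sub' hg' hgs s]
        congr 1
        have h2 := iteratedDeriv_comp_add_const (r + 1) g (-τ)
        simp only [← sub_eq_add_neg] at h2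
        exact congrFun h2 s
      have hFTC : ∫ x in (s - τ)..s, iteratedDeriv (r + 1 + 1) g x =
          iteratedDeriv (r + 1) g s - iteratedDeriv (r + 1) g (s - τ) := by
        rw [← hderiv_eq]
        exact integral_deriv_eq_sub (fun x _ => hGdiff x)
          (by rw [hderiv_eq]; exact (ContDiff.continuous_iteratedDeriv _ hg
            (by exact_mod_cast le_rfl)).intervalIntegrable _ _)
      rw [hΨ, ← hFTC, ← Hdiff]
      exact norm_integral_le_integral_norm (by linarith)
    have ha'b : a' ≤ b := by
      have : (0 : ℝ) ≤ ((r : ℝ) + 1) * τ := by positivity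
      rw [ha']; linarith
    have contΨ : Continuous fun s => ‖iteratedDeriv (r + 1) ψ s‖ :=
      (ContDiff.continuous_iteratedDeriv (r + 1) hψ (by exact_mod_cast le_rfl)).norm
    have hHshift : Continuous fun s => H (s - τ) :=
      hH_cont.comp (continuous_id.sub continuous_const)
    have cmp : ∫ s in a'..b, ‖iteratedDeriv (r + 1) ψ s‖ ≤
        ∫ s in a'..b, (H s - H (s - τ)) :=
      integral_mono_on ha'b (contΨ.intervalIntegrable _ _)
        ((hH_cont.sub hHshift).intervalIntegrable _ _) key2
    have split : ∫ s in a'..b, (H s - H (s - τ)) =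
        (∫ s in (b - τ)..b, H s) - ∫ s in (a' - τ)..a', H s := by
      rw [integral_sub (hH_cont.intervalIntegrable _ _) (hHshift.intervalIntegrable _ _),
        integral_comp_sub_right H τ]
      have A := integral_add_adjacent_intervals (μ := volume) (hH_cont.intervalIntegrable a' (b - τ))
        (hH_cont.intervalIntegrable (b - τ) b)
      have B := integral_add_adjacent_intervals (μ := volume) (hH_cont.intervalIntegrable (a' - τ) a')
        (hH_cont.intervalIntegrable a' (b - τ))
      linarith
    have I1 : 0 ≤ ∫ s in (a' - τ)..a', H s := by
      apply intervalIntegral.integral_nonneg (by linarith)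
      intro s hs
      rw [hH]; dsimp only
      apply intervalIntegral.integral_nonneg (by rw [hca']; exact hs.1)
      intro x _; exact norm_nonneg _
    have I3 : ∫ s in (b - τ)..b, H s ≤ τ * H b := by
      have hpt : ∀ s ∈ Set.Icc (b - τ) b, H s ≤ H b := by
        intro s hs
        have hnn : 0 ≤ ∫ x in s..b, h x :=
          intervalIntegral.integral_nonneg hs.2 (fun x _ => norm_nonneg _)
        have := Hdiff s b
        linarith
      calc ∫ s in (b - τ)..b, H s ≤ ∫ s in (b - τ)..b, H b :=
            integral_mono_on (by linarith) (hH_cont.intervalIntegrable _ _)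
              intervalIntegrable_const hpt
        _ = τ * H b := by rw [intervalIntegral.integral_const, smul_eq_mul]; ring
    -- assemble
    have hfin : ‖(dtau τ)^[r + 1] (Eseq τ g) n‖ = τ⁻¹ * ‖(dtau τ)^[r] (Eseq τ ψ) n‖ := by
      rw [hrepl, norm_smul, Real.norm_eq_abs, abs_of_pos (inv_pos.mpr hτ)]
    have hend : H b = ∫ s in ((n : ℝ) * τ - ((r : ℝ) + 1 + 1) * τ)..((n : ℝ) * τ),
        ‖iteratedDeriv (r + 1 + 1) g s‖ := by
      rw [hH]; dsimp only
      congr 1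
      rw [hc, hb]; ring
    calc ‖(dtau τ)^[r + 1] (Eseq τ g) n‖ = τ⁻¹ * ‖(dtau τ)^[r] (Eseq τ ψ) n‖ := hfin
      _ ≤ τ⁻¹ * (τ * H b) := by
          apply mul_le_mul_of_nonneg_left _ (by positivity)
          calc ‖(dtau τ)^[r] (Eseq τ ψ) n‖
              ≤ ∫ s in a'..b, ‖iteratedDeriv (r + 1) ψ s‖ := bound1
            _ ≤ ∫ s in a'..b, (H s - H (s - τ)) := cmp
            _ ≤ τ * H b := by rw [split]; linarith
      _ = H b := by field_simp
      _ = _ := by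
          rw [hend]
          norm_num
          rfl

end corebound

section main
variable {F : Type*} [NormedAddCommGroup F] [NormedSpace ℝ F] [CompleteSpace F]

lemma step_bound {τ : ℝ} (hτ : 0 < τ) {m n : ℕ} (hn : m ≤ n) {u : ℝ → F}
    (hu : ContDiff ℝ (m + 1 : ℕ) u) {ℓ : ℕ} (hℓ : ℓ < m) :
    ‖(dtau τ)^[m - ℓ] (fun j : ℕ => iteratedDeriv ℓ u ((j : ℝ) * τ)) n -
      (dtau τ)^[m - (ℓ + 1)] (fun j : ℕ => iteratedDeriv (ℓ + 1) u ((j : ℝ) * τ)) n‖ ≤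
      ∫ s in ((n : ℝ) * τ - (m : ℝ) * τ)..((n : ℝ) * τ), ‖iteratedDeriv (m + 1) u s‖ := by
  set r := m - (ℓ + 1) with hr
  have hmr : m - ℓ = r + 1 := by omega
  set v := iteratedDeriv ℓ u with hv
  set g := iteratedDeriv (ℓ + 1) u with hg
  have h' : ContDiff ℝ ((r + 1) + (ℓ + 1) : ℕ) u := by
    rw [show (r + 1) + (ℓ + 1) = m + 1 by omega]; exact hu
  have hgC : ContDiff ℝ (r + 1 : ℕ) g := by
    rw [hg, iteratedDeriv_eq_iterate]; exact ContDiff.iterate_deriv' _ _ h'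
  have hgcont : Continuous g := hgC.continuous
  have hvdiff : Differentiable ℝ v :=
    hu.differentiable_iteratedDeriv ℓ (by exact_mod_cast Nat.lt_succ_of_le (Nat.le_of_lt_succ (by omega)))
  have hderiv_eq : deriv v = g := by rw [hv, hg, ← iteratedDeriv_succ]
  set A : ℕ → F := fun j => v ((j : ℝ) * τ) with hA
  set B : ℕ → F := fun j => g ((j : ℝ) * τ) with hB
  have hpt : ∀ j : ℕ, 1 ≤ j → dtau τ A j - B j = Eseq τ g j := by
    intro j hj
    have hcast : ((j - 1 : ℕ) : ℝ) * τ = (j : ℝ) * τ - τ := by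
      rw [Nat.cast_sub hj]; push_cast; ring
    have hFTC : ∫ s in ((j : ℝ) * τ - τ)..((j : ℝ) * τ), g s =
        v ((j : ℝ) * τ) - v ((j : ℝ) * τ - τ) := by
      rw [← hderiv_eq]
      exact integral_deriv_eq_sub (fun x _ => hvdiff x)
        (by rw [hderiv_eq]; exact hgcont.intervalIntegrable _ _)
    have : Eseq τ g j = τ⁻¹ • ((∫ s in ((j : ℝ) * τ - τ)..((j : ℝ) * τ), g s)
        - τ • g ((j : ℝ) * τ)) := by
      rw [Eseq, integral_sub (hgcont.intervalIntegrable _ _) intervalIntegrable_const,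
        intervalIntegral.integral_const]
      congr 2
      ring_nf
    rw [this, hFTC, smul_sub, smul_smul, inv_mul_cancel₀ hτ.ne', one_smul]
    show τ⁻¹ • (A j - A (j - 1)) - B j = _
    rw [hA, hB]
    dsimp only
    rw [hcast]
  have hrw : (dtau τ)^[m - ℓ] A n - (dtau τ)^[r] B n = (dtau τ)^[r] (Eseq τ g) n := by
    rw [hmr, Function.iterate_succ_apply]
    rw [show (dtau τ)^[r] (dtau τ A) n - (dtau τ)^[r] B n
        = (dtau τ)^[r] (fun j => dtau τ A j - B j) n from
      (congrFun (dtau_iter_sub τ r (dtau τ A) B) n).symm]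
    exact dtau_congr τ r _ _ n (fun j hj1 hj2 => hpt j (by omega))
  rw [hrw]
  have hmain := core_bound hτ r g hgC n (by omega)
  have hIdentify : iteratedDeriv (r + 1) g = iteratedDeriv (m + 1) u := by
    rw [hg, iteratedDeriv_iteratedDeriv, show r + 1 + (ℓ + 1) = m + 1 by omega]
  rw [hIdentify] at hmain
  refine le_trans hmain (integral_mono_interval ?_ ?_ le_rfl ?_ ?_)
  · have h1 : ((r : ℝ) + 1) ≤ (m : ℝ) := by exact_mod_cast by omega
    nlinarith
  · have : (0 : ℝ) ≤ ((r : ℝ) + 1) * τ := by positivity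
    linarith
  · filter_upwards with x using norm_nonneg _
  · exact ((hu.continuous_iteratedDeriv (m + 1)
      (by exact_mod_cast le_rfl)).norm).intervalIntegrable _ _

lemma telescope_bound {τ : ℝ} (hτ : 0 < τ) {m n : ℕ} (hn : m ≤ n) {u : ℝ → F}
    (hu : ContDiff ℝ (m + 1 : ℕ) u) :
    ∀ (d ℓ : ℕ), ℓ + d ≤ m →
      ‖(dtau τ)^[m - ℓ] (fun j : ℕ => iteratedDeriv ℓ u ((j : ℝ) * τ)) n -
        (dtau τ)^[m - (ℓ + d)] (fun j : ℕ => iteratedDeriv (ℓ + d) u ((j : ℝ) * τ)) n‖ ≤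
      (d : ℝ) * ∫ s in ((n : ℝ) * τ - (m : ℝ) * τ)..((n : ℝ) * τ),
        ‖iteratedDeriv (m + 1) u s‖ := by
  intro d
  induction d with
  | zero => intro ℓ _; simp
  | succ d IH =>
    intro ℓ hℓd
    have h1 := IH ℓ (by omega)
    have h2 := step_bound hτ hn hu (ℓ := ℓ + d) (by omega)
    have tri : ‖(dtau τ)^[m - ℓ] (fun j : ℕ => iteratedDeriv ℓ u ((j : ℝ) * τ)) n -
        (dtau τ)^[m - (ℓ + (d + 1))] (fun j : ℕ => iteratedDeriv (ℓ + (d + 1)) u ((j : ℝ) * τ)) n‖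
        ≤ ‖(dtau τ)^[m - ℓ] (fun j : ℕ => iteratedDeriv ℓ u ((j : ℝ) * τ)) n -
            (dtau τ)^[m - (ℓ + d)] (fun j : ℕ => iteratedDeriv (ℓ + d) u ((j : ℝ) * τ)) n‖ +
          ‖(dtau τ)^[m - (ℓ + d)] (fun j : ℕ => iteratedDeriv (ℓ + d) u ((j : ℝ) * τ)) n -
            (dtau τ)^[m - (ℓ + d + 1)] (fun j : ℕ => iteratedDeriv (ℓ + d + 1) u ((j : ℝ) * τ)) n‖ := by
      rw [show ℓ + (d + 1) = ℓ + d + 1 by omega]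
      exact norm_sub_le_norm_sub_add_norm_sub _ _ _
    calc _ ≤ _ := tri
      _ ≤ (d : ℝ) * (∫ s in ((n : ℝ) * τ - (m : ℝ) * τ)..((n : ℝ) * τ),
            ‖iteratedDeriv (m + 1) u s‖) + 1 * ∫ s in ((n : ℝ) * τ - (m : ℝ) * τ)..((n : ℝ) * τ),
            ‖iteratedDeriv (m + 1) u s‖ := by
          rw [one_mul]; exact add_le_add h1 h2
      _ = _ := by push_cast; ring

theorem main_complete
    (m : ℕ) (hm : 1 ≤ m) (u : ℝ → F) (hu : ContDiff ℝ (m + 1 : ℕ) u)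
    (τ : ℝ) (hτ : 0 < τ) (n : ℕ) (hn : m ≤ n)
    (ℓ₁ ℓ₂ : ℕ) (hℓ₁ : ℓ₁ ≤ m) (hℓ₂ : ℓ₂ ≤ m) :
    ‖(dtau τ)^[m - ℓ₁] (fun j : ℕ => iteratedDeriv ℓ₁ u ((j : ℝ) * τ)) n -
        (dtau τ)^[m - ℓ₂] (fun j : ℕ => iteratedDeriv ℓ₂ u ((j : ℝ) * τ)) n‖ ≤
      (m : ℝ) *
        ∫ s in (((n - m : ℕ) : ℝ) * τ)..((n : ℝ) * τ),
          ‖iteratedDeriv (m + 1) u s‖ := by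
  have hcast : ((n - m : ℕ) : ℝ) * τ = (n : ℝ) * τ - (m : ℝ) * τ := by
    rw [Nat.cast_sub hn]; ring
  rw [hcast]
  set I := ∫ s in ((n : ℝ) * τ - (m : ℝ) * τ)..((n : ℝ) * τ), ‖iteratedDeriv (m + 1) u s‖ with hI
  have hI0 : 0 ≤ I := by
    apply intervalIntegral.integral_nonneg
    · have : (0 : ℝ) ≤ (m : ℝ) * τ := by positivity
      linarith
    · intro x _; exact norm_nonneg _
  have key : ∀ a b : ℕ, a ≤ b → b ≤ m →
      ‖(dtau τ)^[m - a] (fun j : ℕ => iteratedDeriv a u ((j : ℝ) * τ)) n -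
        (dtau τ)^[m - b] (fun j : ℕ => iteratedDeriv b u ((j : ℝ) * τ)) n‖ ≤ (m : ℝ) * I := by
    intro a b hab hbm
    have := telescope_bound hτ hn hu (b - a) a (by omega)
    rw [show a + (b - a) = b by omega] at this
    refine le_trans this (mul_le_mul_of_nonneg_right ?_ hI0)
    exact_mod_cast by omega
  rcases le_total ℓ₁ ℓ₂ with h | h
  · exact key ℓ₁ ℓ₂ h hℓ₂
  · rw [norm_sub_rev]; exact key ℓ₂ ℓ₁ h hℓ₁
end main

/-- The key L¹-in-time bound from the appendix proof of Lemma 4.2 of the paper: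
mixed discrete/continuous derivatives of total order `m` of a `C^{m+1}` function differ
by at most `m ∫_{t_{n-m}}^{t_n} ‖u^{(m+1)}‖`. -/
theorem discrete_derivative_defect_L1_estimate
    {E : Type*} [NormedAddCommGroup E] [NormedSpace ℝ E]
    (m : ℕ) (hm : 1 ≤ m) (u : ℝ → E) (hu : ContDiff ℝ (m + 1 : ℕ) u)
    (τ : ℝ) (hτ : 0 < τ) (n : ℕ) (hn : m ≤ n)
    (ℓ₁ ℓ₂ : ℕ) (hℓ₁ : ℓ₁ ≤ m) (hℓ₂ : ℓ₂ ≤ m) :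
    ‖(dtau τ)^[m - ℓ₁] (fun j : ℕ => iteratedDeriv ℓ₁ u ((j : ℝ) * τ)) n -
        (dtau τ)^[m - ℓ₂] (fun j : ℕ => iteratedDeriv ℓ₂ u ((j : ℝ) * τ)) n‖ ≤
      (m : ℝ) *
        ∫ s in (((n - m : ℕ) : ℝ) * τ)..((n : ℝ) * τ),
          ‖iteratedDeriv (m + 1) u s‖ := by
  set L : E →L[ℝ] UniformSpace.Completion E := UniformSpace.Completion.toComplL with hL
  have hLnorm : ∀ x : E, ‖L x‖ = ‖x‖ := fun x => by
    rw [show L x = (x : UniformSpace.Completion E) from rfl]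
    exact UniformSpace.Completion.norm_coe x
  set U : ℝ → UniformSpace.Completion E := fun s => L (u s) with hU
  have hUc : ContDiff ℝ (m + 1 : ℕ) U := L.contDiff.comp hu
  have hiter : ∀ (i : ℕ), i ≤ m + 1 → ∀ t : ℝ, iteratedDeriv i U t = L (iteratedDeriv i u t) := by
    intro i hi t
    rw [iteratedDeriv_eq_iteratedFDeriv, iteratedDeriv_eq_iteratedFDeriv]
    rw [show U = L ∘ u from rfl, L.iteratedFDeriv_comp_left (x := t) hu.contDiffAt (by exact_mod_cast hi)]
    rfl
  have hseq : ∀ (ℓ : ℕ), ℓ ≤ m →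
      (dtau τ)^[m - ℓ] (fun j : ℕ => iteratedDeriv ℓ U ((j : ℝ) * τ)) n
        = L ((dtau τ)^[m - ℓ] (fun j : ℕ => iteratedDeriv ℓ u ((j : ℝ) * τ)) n) := by
    intro ℓ hℓ
    have heq : (fun j : ℕ => iteratedDeriv ℓ U ((j : ℝ) * τ))
        = fun j : ℕ => L (iteratedDeriv ℓ u ((j : ℝ) * τ)) := by
      funext j; exact hiter ℓ (by omega) _
    rw [heq, dtau_clm]
  have hmain := main_complete m hm U hUc τ hτ n hn ℓ₁ ℓ₂ hℓ₁ hℓ₂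
  rw [hseq ℓ₁ hℓ₁, hseq ℓ₂ hℓ₂, ← map_sub, hLnorm] at hmain
  have hnormeq : ∀ s : ℝ, ‖iteratedDeriv (m + 1) U s‖ = ‖iteratedDeriv (m + 1) u s‖ :=
    fun s => by rw [hiter (m + 1) le_rfl s, hLnorm]
  simpa only [hnormeq] using hmain
end

section
/- Let E be a real Banach space, m ≥ 1, and let u : ℝ → E be (m+1)-times continuously differentiable. Let τ > 0, set t_j := j·τ, and let n ≥ m. Then for all ℓ₁, ℓ₂ ∈ {0, 1, …, m} one has ‖∂_τ^{m−ℓ₁}(u^{(ℓ₁)})(t_n) − ∂_τ^{m−ℓ₂}(u^{(ℓ₂)})(t_n)‖ ≤ m² · τ · sup_{s ∈ [t_{n−m}, t_n]} ‖u^{(m+1)}(s)‖, where ∂_τ^{k} is applied to the grid sequence j ↦ u^{(ℓ)}(t_j). -/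
section aux

variable {E : Type*} [NormedAddCommGroup E] [NormedSpace ℝ E]

/-- Continuous backward difference quotient. -/
noncomputable def Dc (τ : ℝ) (v : ℝ → E) : ℝ → E := fun t => τ⁻¹ • (v t - v (t - τ))

lemma contDiff_shift {k : ℕ} (τ : ℝ) {v : ℝ → E} (hv : ContDiff ℝ k v) :
    ContDiff ℝ k (fun t => v (t - τ)) :=
  hv.comp (contDiff_id.sub contDiff_const)

lemma Dc_contDiff {k : ℕ} (τ : ℝ) {v : ℝ → E} (hv : ContDiff ℝ k v) :
    ContDiff ℝ k (Dc τ v) := by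
  unfold Dc
  exact (hv.sub (contDiff_shift τ hv)).const_smul _

lemma iteratedDeriv_shift (k : ℕ) (τ : ℝ) (v : ℝ → E) (t : ℝ) :
    iteratedDeriv k (fun s => v (s - τ)) t = iteratedDeriv k v (t - τ) := by
  have h := iteratedDeriv_comp_add_const k v (-τ)
  simp only [← sub_eq_add_neg] at h
  exact congrFun h t

lemma iteratedDeriv_Dc (k : ℕ) (τ : ℝ) {v : ℝ → E} (hv : ContDiff ℝ k v) :
    iteratedDeriv k (Dc τ v) = Dc τ (iteratedDeriv k v) := by
  funext t
  have h1 : Dc τ v = (τ⁻¹ : ℝ) • (v - fun s => v (s - τ)) := by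
    funext s; simp [Dc]
  have hsub : ContDiff ℝ k (v - fun s => v (s - τ)) := hv.sub (contDiff_shift τ hv)
  have hshift : ContDiff ℝ k (fun s => v (s - τ)) := contDiff_shift τ hv
  rw [h1, ← iteratedDerivWithin_univ,
    iteratedDerivWithin_const_smul (Set.mem_univ t) uniqueDiffOn_univ (τ⁻¹ : ℝ)
      hsub.contDiffWithinAt,
    iteratedDerivWithin_sub (Set.mem_univ t) uniqueDiffOn_univ hv.contDiffWithinAt
      hshift.contDiffWithinAt,
    iteratedDerivWithin_univ, iteratedDerivWithin_univ, iteratedDeriv_shift]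
  rfl

lemma grid_iter (τ : ℝ) (v : ℝ → E) :
    ∀ k n : ℕ, k ≤ n →
      (dtau τ)^[k] (fun j : ℕ => v ((j : ℝ) * τ)) n = (Dc τ)^[k] v ((n : ℝ) * τ) := by
  intro k
  induction k with
  | zero => intro n _; simp
  | succ k IH =>
    intro n hn
    have h1 : 1 ≤ n := le_trans (Nat.succ_le_succ (Nat.zero_le k)) hn
    rw [Function.iterate_succ_apply', Function.iterate_succ_apply']
    have hn1 : k ≤ n - 1 := by omega
    have hcast : ((n - 1 : ℕ) : ℝ) = (n : ℝ) - 1 := by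
      rw [Nat.cast_sub h1, Nat.cast_one]
    simp only [dtau, Dc]
    rw [IH n (by omega), IH (n - 1) hn1, hcast,
      show ((n : ℝ) - 1) * τ = (n : ℝ) * τ - τ by ring]

lemma iteratedDeriv_iteratedDeriv' (k ℓ : ℕ) (u : ℝ → E) :
    iteratedDeriv k (iteratedDeriv ℓ u) = iteratedDeriv (k + ℓ) u := by
  induction k with
  | zero => simp
  | succ k IH =>
    rw [iteratedDeriv_succ, IH, show k + 1 + ℓ = (k + ℓ) + 1 by ring, iteratedDeriv_succ]

lemma iter_Dc_mem_ball (τ : ℝ) (hτ : 0 < τ) (z : E) (r : ℝ) :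
    ∀ (k : ℕ) (v : ℝ → E), ContDiff ℝ k v → ∀ t : ℝ,
      (∀ s ∈ Set.Icc (t - k * τ) t, ‖iteratedDeriv k v s - z‖ ≤ r) →
      ‖(Dc τ)^[k] v t - z‖ ≤ r := by
  intro k
  induction k with
  | zero =>
    intro v _ t h
    simpa using h t (by constructor <;> simp)
  | succ k IH =>
    intro v hv t h
    have hvk : ContDiff ℝ k v := hv.of_le (by exact_mod_cast k.le_succ)
    rw [Function.iterate_succ_apply]
    apply IH (Dc τ v) (Dc_contDiff τ hvk) t
    intro s hs
    rw [iteratedDeriv_Dc k τ hvk]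
    set f := iteratedDeriv k v with hf
    set g : ℝ → E := fun σ => f σ - σ • z with hg
    have hderiv : ∀ σ ∈ Set.Icc (s - τ) s,
        HasDerivWithinAt g (iteratedDeriv (k + 1) v σ - z) (Set.Icc (s - τ) s) σ := by
      intro σ _
      have hdiff : DifferentiableAt ℝ f σ :=
        (hv.differentiable_iteratedDeriv k (by exact_mod_cast k.lt_succ_self)).differentiableAt
      have hfd : HasDerivAt f (iteratedDeriv (k + 1) v σ) σ := by
        have := hdiff.hasDerivAt
        rwa [show deriv f σ = iteratedDeriv (k + 1) v σ by rw [iteratedDeriv_succ]] at this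
      have hsz : HasDerivAt (fun σ : ℝ => σ • z) z σ := by
        simpa using (hasDerivAt_id σ).smul_const z
      exact (hfd.sub hsz).hasDerivWithinAt
    have hbound : ∀ σ ∈ Set.Ico (s - τ) s, ‖iteratedDeriv (k + 1) v σ - z‖ ≤ r := by
      intro σ hσ
      apply h σ
      have hs1 := hs.1
      have hs2 := hs.2
      have hσ1 := hσ.1
      have hσ2 := hσ.2
      constructor
      · push_cast
        linarith
      · linarith
    have hmvt := norm_image_sub_le_of_norm_deriv_le_segment' hderiv hbound s
      (Set.right_mem_Icc.2 (by linarith))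
    have key : Dc τ f s - z = τ⁻¹ • (g s - g (s - τ)) := by
      have h2 : g s - g (s - τ) = (f s - f (s - τ)) - τ • z := by
        simp only [hg]
        rw [sub_smul]
        abel
      rw [h2, smul_sub, smul_smul, inv_mul_cancel₀ hτ.ne', one_smul]
      rfl
    rw [key, norm_smul]
    have : ‖g s - g (s - τ)‖ ≤ r * τ := by
      calc ‖g s - g (s - τ)‖ ≤ r * (s - (s - τ)) := hmvt
        _ = r * τ := by ring_nf
    calc ‖(τ⁻¹ : ℝ)‖ * ‖g s - g (s - τ)‖ ≤ τ⁻¹ * (r * τ) := by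
          rw [Real.norm_eq_abs, abs_of_pos (inv_pos.2 hτ)]
          exact mul_le_mul_of_nonneg_left this (inv_pos.2 hτ).le
      _ = r := by field_simp

end aux

/-- The `O(τ)` estimate of Lemma 4.2 of the paper: mixed discrete/continuous derivatives
of total order `m` of a `C^{m+1}` function differ by at most
`m² τ sup_{[t_{n-m}, t_n]} ‖u^{(m+1)}‖`. -/
theorem discrete_derivative_defect_sup_estimate
    {E : Type*} [NormedAddCommGroup E] [NormedSpace ℝ E]
    (m : ℕ) (hm : 1 ≤ m) (u : ℝ → E) (hu : ContDiff ℝ (m + 1 : ℕ) u)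
    (τ : ℝ) (hτ : 0 < τ) (n : ℕ) (hn : m ≤ n)
    (ℓ₁ ℓ₂ : ℕ) (hℓ₁ : ℓ₁ ≤ m) (hℓ₂ : ℓ₂ ≤ m) :
    ‖(dtau τ)^[m - ℓ₁] (fun j : ℕ => iteratedDeriv ℓ₁ u ((j : ℝ) * τ)) n -
        (dtau τ)^[m - ℓ₂] (fun j : ℕ => iteratedDeriv ℓ₂ u ((j : ℝ) * τ)) n‖ ≤
      (m : ℝ) ^ 2 * τ *
        ⨆ s : Set.Icc (((n - m : ℕ) : ℝ) * τ) ((n : ℝ) * τ),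
          ‖iteratedDeriv (m + 1) u (s : ℝ)‖ := by
  set a : ℝ := ((n - m : ℕ) : ℝ) * τ with ha
  set b : ℝ := (n : ℝ) * τ with hb
  set L : ℝ := ⨆ s : Set.Icc a b, ‖iteratedDeriv (m + 1) u (s : ℝ)‖ with hLdef
  have hcasta : ((n - m : ℕ) : ℝ) = (n : ℝ) - m := by
    rw [Nat.cast_sub hn]
  have hab : a ≤ b := by
    rw [ha, hb, hcasta]
    have : (0 : ℝ) ≤ m := Nat.cast_nonneg m
    nlinarith
  have hcont : Continuous fun s : ℝ => ‖iteratedDeriv (m + 1) u s‖ :=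
    (hu.continuous_iteratedDeriv (m + 1) le_rfl).norm
  have hbdd : BddAbove (Set.range fun s : Set.Icc a b => ‖iteratedDeriv (m + 1) u (s : ℝ)‖) := by
    have himg : IsCompact ((fun s : ℝ => ‖iteratedDeriv (m + 1) u s‖) '' Set.Icc a b) :=
      isCompact_Icc.image hcont
    refine BddAbove.mono ?_ himg.bddAbove
    rintro _ ⟨s, rfl⟩
    exact ⟨s, s.2, rfl⟩
  have hL : ∀ s ∈ Set.Icc a b, ‖iteratedDeriv (m + 1) u s‖ ≤ L := fun s hs =>
    le_ciSup hbdd ⟨s, hs⟩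
  have hL0 : 0 ≤ L := le_trans (norm_nonneg _) (hL b ⟨hab, le_rfl⟩)
  -- key per-term estimate
  have key : ∀ ℓ : ℕ, ℓ ≤ m →
      ‖(dtau τ)^[m - ℓ] (fun j : ℕ => iteratedDeriv ℓ u ((j : ℝ) * τ)) n -
        iteratedDeriv m u b‖ ≤ ((m - ℓ : ℕ) : ℝ) * τ * L := by
    intro ℓ hℓ
    have hv : ContDiff ℝ (m - ℓ : ℕ) (iteratedDeriv ℓ u) := by
      rw [iteratedDeriv_eq_iterate]
      apply ContDiff.iterate_deriv' (m - ℓ) ℓ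
      have : (m - ℓ) + ℓ = m := Nat.sub_add_cancel hℓ
      rw [this]
      exact hu.of_le (by exact_mod_cast m.le_succ)
    rw [grid_iter τ _ (m - ℓ) n (le_trans (Nat.sub_le m ℓ) hn)]
    apply iter_Dc_mem_ball τ hτ _ _ (m - ℓ) _ hv b
    intro s hs
    rw [iteratedDeriv_iteratedDeriv', Nat.sub_add_cancel hℓ]
    have hcastk : ((m - ℓ : ℕ) : ℝ) = (m : ℝ) - ℓ := by rw [Nat.cast_sub hℓ]
    have hsa : a ≤ s := by
      have := hs.1
      rw [ha, hcasta]
      rw [hcastk] at this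
      have hℓ0 : (0 : ℝ) ≤ ℓ := Nat.cast_nonneg ℓ
      nlinarith
    have hsb : s ≤ b := hs.2
    -- MVT on [s, b]
    have hderiv : ∀ x ∈ Set.Icc s b,
        HasDerivWithinAt (iteratedDeriv m u) (iteratedDeriv (m + 1) u x) (Set.Icc s b) x := by
      intro x _
      have hdiff : DifferentiableAt ℝ (iteratedDeriv m u) x :=
        (hu.differentiable_iteratedDeriv m (by exact_mod_cast m.lt_succ_self)).differentiableAt
      have := hdiff.hasDerivAt
      rw [show deriv (iteratedDeriv m u) x = iteratedDeriv (m + 1) u x by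
        rw [iteratedDeriv_succ]] at this
      exact this.hasDerivWithinAt
    have hbound : ∀ x ∈ Set.Ico s b, ‖iteratedDeriv (m + 1) u x‖ ≤ L := fun x hx =>
      hL x ⟨le_trans hsa hx.1, hx.2.le⟩
    have hmvt := norm_image_sub_le_of_norm_deriv_le_segment' hderiv hbound b
      (Set.right_mem_Icc.2 hsb)
    rw [norm_sub_rev]
    calc ‖iteratedDeriv m u b - iteratedDeriv m u s‖ ≤ L * (b - s) := hmvt
      _ ≤ L * (((m - ℓ : ℕ) : ℝ) * τ) := by
          apply mul_le_mul_of_nonneg_left _ hL0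
          have := hs.1
          linarith
      _ = ((m - ℓ : ℕ) : ℝ) * τ * L := by ring
  rcases eq_or_ne ℓ₁ ℓ₂ with rfl | hne
  · simp only [sub_self, norm_zero]
    positivity
  · have h1 := key ℓ₁ hℓ₁
    have h2 := key ℓ₂ hℓ₂
    have htri : ‖(dtau τ)^[m - ℓ₁] (fun j : ℕ => iteratedDeriv ℓ₁ u ((j : ℝ) * τ)) n -
        (dtau τ)^[m - ℓ₂] (fun j : ℕ => iteratedDeriv ℓ₂ u ((j : ℝ) * τ)) n‖ ≤
        ((m - ℓ₁ : ℕ) : ℝ) * τ * L + ((m - ℓ₂ : ℕ) : ℝ) * τ * L := by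
      calc ‖_ - _‖ = ‖((dtau τ)^[m - ℓ₁] (fun j : ℕ => iteratedDeriv ℓ₁ u ((j : ℝ) * τ)) n -
              iteratedDeriv m u b) -
            ((dtau τ)^[m - ℓ₂] (fun j : ℕ => iteratedDeriv ℓ₂ u ((j : ℝ) * τ)) n -
              iteratedDeriv m u b)‖ := by abel_nf
        _ ≤ _ := le_trans (norm_sub_le _ _) (add_le_add h1 h2)
    refine le_trans htri ?_
    have hc1 : ((m - ℓ₁ : ℕ) : ℝ) = (m : ℝ) - ℓ₁ := by rw [Nat.cast_sub hℓ₁]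
    have hc2 : ((m - ℓ₂ : ℕ) : ℝ) = (m : ℝ) - ℓ₂ := by rw [Nat.cast_sub hℓ₂]
    have hsum : (1 : ℝ) ≤ (ℓ₁ : ℝ) + ℓ₂ := by
      have : 1 ≤ ℓ₁ + ℓ₂ := by omega
      exact_mod_cast this
    have hm1 : (1 : ℝ) ≤ (m : ℝ) := by exact_mod_cast hm
    have hfact : ((m - ℓ₁ : ℕ) : ℝ) + ((m - ℓ₂ : ℕ) : ℝ) ≤ (m : ℝ) ^ 2 := by
      rw [hc1, hc2]
      nlinarith [sq_nonneg ((m : ℝ) - 1)]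
    have hτL : 0 ≤ τ * L := mul_nonneg hτ.le hL0
    calc ((m - ℓ₁ : ℕ) : ℝ) * τ * L + ((m - ℓ₂ : ℕ) : ℝ) * τ * L
        = (((m - ℓ₁ : ℕ) : ℝ) + ((m - ℓ₂ : ℕ) : ℝ)) * (τ * L) := by ring
      _ ≤ (m : ℝ) ^ 2 * (τ * L) := mul_le_mul_of_nonneg_right hfact hτL
      _ = (m : ℝ) ^ 2 * τ * L := by ring
end
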